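/- Let G be an N×N matrix with entries in {0,1}, and let N' be an Nn×Nn block matrix whose (i,j)-th n×n block equals A^{ij} if G_{ij}=1 and the zero matrix otherwise. Then the operator 2-norm of N' satisfies ‖N'‖₂ ≤ √(‖G‖₁ · ‖G‖_∞) · max_{i,j} ‖A^{ij}‖₂, where ‖G‖₁ is the maximum absolute column sum and ‖G‖_∞ the maximum absolute row sum. -/

import Mathlib

noncomputable def opNorm {m n : Type*} [Fintype m] [Fintype n] [DecidableEq n]
    (M : Matrix m n ℝ) : ℝ :=
  ‖LinearMap.toContinuousLinearMap (Matrix.toEuclideanLin (𝕜 := ℝ) M)‖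

lemma opNorm_mulVec_le {m n : ℕ} (M : Matrix (Fin m) (Fin n) ℝ)
    (v : EuclideanSpace ℝ (Fin n)) :
    ‖(Matrix.toEuclideanLin (𝕜 := ℝ) M) v‖ ≤ opNorm M * ‖v‖ :=
  (LinearMap.toContinuousLinearMap (Matrix.toEuclideanLin (𝕜 := ℝ) M)).le_opNorm v

theorem block_matrix_opNorm_bound (N n : ℕ) (hN : 0 < N) (hn : 0 < n)
    (G : Matrix (Fin N) (Fin N) ℝ)
    (hG : ∀ i j, G i j = 0 ∨ G i j = 1)
    (A : Fin N → Fin N → Matrix (Fin n) (Fin n) ℝ)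
    (N' : Matrix (Fin N × Fin n) (Fin N × Fin n) ℝ)
    (hN' : ∀ i j a b, N' (i, a) (j, b) = if G i j = 1 then A i j a b else 0) :
    opNorm N' ≤
      Real.sqrt ((⨆ j, ∑ i, |G i j|) * (⨆ i, ∑ j, |G i j|)) *
        ⨆ i, ⨆ j, opNorm (A i j) := by
  classical
  have i0 : Fin N := ⟨0, hN⟩
  set K : ℝ := ⨆ i, ⨆ j, opNorm (A i j) with hKdef
  set C : ℝ := ⨆ j, ∑ i, |G i j| with hCdef
  set R : ℝ := ⨆ i, ∑ j, |G i j| with hRdef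
  have hg0 : ∀ i j, 0 ≤ G i j := by
    intro i j; rcases hG i j with h | h <;> rw [h] <;> norm_num
  have habs : ∀ i j, |G i j| = G i j := fun i j => abs_of_nonneg (hg0 i j)
  have hg2 : ∀ i j, G i j * G i j = G i j := by
    intro i j; rcases hG i j with h | h <;> rw [h] <;> ring
  have hKle : ∀ i j, opNorm (A i j) ≤ K := by
    intro i j
    refine le_trans
      (le_ciSup (f := fun j => opNorm (A i j))
        (Set.Finite.bddAbove (Set.finite_range _)) j) ?_
    exact le_ciSup (f := fun i => ⨆ j, opNorm (A i j))
      (Set.Finite.bddAbove (Set.finite_range _)) i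
  have hK0 : 0 ≤ K := le_trans (norm_nonneg _) (hKle i0 i0)
  have hRle : ∀ i, ∑ j, G i j ≤ R := by
    intro i
    rw [hRdef]
    simp only [habs]
    exact le_ciSup (f := fun i => ∑ j, G i j)
      (Set.Finite.bddAbove (Set.finite_range _)) i
  have hCle : ∀ j, ∑ i, G i j ≤ C := by
    intro j
    rw [hCdef]
    simp only [habs]
    exact le_ciSup (f := fun j => ∑ i, G i j)
      (Set.Finite.bddAbove (Set.finite_range _)) j
  have hR0 : 0 ≤ R := le_trans (Finset.sum_nonneg fun j _ => hg0 i0 j) (hRle i0)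
  have hC0 : 0 ≤ C := le_trans (Finset.sum_nonneg fun i _ => hg0 i i0) (hCle i0)
  have hN2 : ∀ i j a b, N' (i, a) (j, b) = G i j * A i j a b := by
    intro i j a b
    rw [hN' i j a b]
    rcases hG i j with h | h
    · rw [h]; simp [h]
    · simp [h]
  rw [opNorm]
  refine ContinuousLinearMap.opNorm_le_bound _
    (mul_nonneg (Real.sqrt_nonneg _) hK0) ?_
  intro x
  -- block components of x
  set xb : Fin N → EuclideanSpace ℝ (Fin n) := fun j => WithLp.toLp 2 (fun b => x (j, b)) with hxb
  set y : Fin N → EuclideanSpace ℝ (Fin n) :=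
    fun i => ∑ j, G i j • (Matrix.toEuclideanLin (𝕜 := ℝ) (A i j)) (xb j) with hy
  have hsum_apply : ∀ (f : Fin N → EuclideanSpace ℝ (Fin n)) (b : Fin n),
      (∑ j, f j) b = ∑ j, f j b := fun f b => by
        rw [WithLp.ofLp_sum]; exact Finset.sum_apply b Finset.univ (fun j => (f j).ofLp)
  have happly : ∀ i b,
      (LinearMap.toContinuousLinearMap (Matrix.toEuclideanLin (𝕜 := ℝ) N') x) (i, b)
        = y i b := by
    intro i b
    have h1 : (LinearMap.toContinuousLinearMap (Matrix.toEuclideanLin (𝕜 := ℝ) N') x) (i, b)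
        = ∑ p : Fin N × Fin n, N' (i, b) p * x p := by
      rfl
    rw [h1, Fintype.sum_prod_type, hy]
    beta_reduce
    rw [hsum_apply]
    refine Finset.sum_congr rfl fun j _ => ?_
    have h3 : (G i j • (Matrix.toEuclideanLin (𝕜 := ℝ) (A i j)) (xb j)) b
        = G i j * ∑ c, A i j b c * x (j, c) := rfl
    rw [h3, Finset.mul_sum]
    exact Finset.sum_congr rfl fun c _ => by rw [hN2 i j b c]; ring
  -- squared norm identity
  have hnorm_sq : ‖(LinearMap.toContinuousLinearMap (Matrix.toEuclideanLin (𝕜 := ℝ) N') x)‖ ^ 2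
      = ∑ i, ‖y i‖ ^ 2 := by
    rw [EuclideanSpace.norm_eq]
    rw [Real.sq_sqrt (Finset.sum_nonneg fun p _ => sq_nonneg _)]
    rw [Fintype.sum_prod_type]
    congr 1; ext i
    rw [EuclideanSpace.norm_eq, Real.sq_sqrt (Finset.sum_nonneg fun b _ => sq_nonneg _)]
    congr 1; ext b
    rw [happly i b, Real.norm_eq_abs, sq_abs]
  -- bound on ‖y i‖
  have hyle : ∀ i, ‖y i‖ ≤ ∑ j, G i j * (K * ‖xb j‖) := by
    intro i
    refine le_trans (norm_sum_le _ _) (Finset.sum_le_sum fun j _ => ?_)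
    rw [norm_smul, Real.norm_eq_abs, habs i j]
    exact mul_le_mul_of_nonneg_left
      (le_trans (opNorm_mulVec_le _ _)
        (mul_le_mul_of_nonneg_right (hKle i j) (norm_nonneg _))) (hg0 i j)
  -- Cauchy–Schwarz step
  have hyssq : ∀ i, ‖y i‖ ^ 2 ≤ R * (K ^ 2 * ∑ j, G i j * ‖xb j‖ ^ 2) := by
    intro i
    have h1 : ‖y i‖ ^ 2 ≤ (∑ j, G i j * (K * ‖xb j‖)) ^ 2 := by
      have := hyle i
      have hnn : (0:ℝ) ≤ ‖y i‖ := norm_nonneg _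
      nlinarith [norm_nonneg (y i),
        Finset.sum_nonneg (fun j (_ : j ∈ Finset.univ) =>
          mul_nonneg (hg0 i j) (mul_nonneg hK0 (norm_nonneg (xb j))))]
    refine h1.trans ?_
    have hcs := Finset.sum_mul_sq_le_sq_mul_sq Finset.univ (fun j => G i j)
      (fun j => G i j * (K * ‖xb j‖))
    have heq : ∀ j, G i j * (K * ‖xb j‖) = G i j * (G i j * (K * ‖xb j‖)) := by
      intro j; rcases hG i j with h | h <;> rw [h] <;> ring
    calc (∑ j, G i j * (K * ‖xb j‖)) ^ 2
        = (∑ j, G i j * (G i j * (K * ‖xb j‖))) ^ 2 := by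
          congr 1; exact Finset.sum_congr rfl fun j _ => heq j
      _ ≤ (∑ j, G i j ^ 2) * ∑ j, (G i j * (K * ‖xb j‖)) ^ 2 :=
          Finset.sum_mul_sq_le_sq_mul_sq Finset.univ _ _
      _ ≤ R * (K ^ 2 * ∑ j, G i j * ‖xb j‖ ^ 2) := by
          have e1 : ∑ j, G i j ^ 2 = ∑ j, G i j := by
            refine Finset.sum_congr rfl fun j _ => ?_
            rw [sq, hg2]
          have e2 : ∑ j, (G i j * (K * ‖xb j‖)) ^ 2
              = K ^ 2 * ∑ j, G i j * ‖xb j‖ ^ 2 := by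
            rw [Finset.mul_sum]
            refine Finset.sum_congr rfl fun j _ => ?_
            rw [mul_pow, mul_pow, sq (G i j), hg2]
            ring
          rw [e1, e2]
          refine mul_le_mul_of_nonneg_right (hRle i) ?_
          exact mul_nonneg (sq_nonneg _) (Finset.sum_nonneg fun j _ =>
            mul_nonneg (hg0 i j) (sq_nonneg _))
  -- total bound
  have hxsq : ∑ j, ‖xb j‖ ^ 2 = ‖x‖ ^ 2 := by
    rw [EuclideanSpace.norm_eq, Real.sq_sqrt (Finset.sum_nonneg fun p _ => sq_nonneg _)]
    rw [Fintype.sum_prod_type]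
    refine Finset.sum_congr rfl fun j _ => ?_
    rw [EuclideanSpace.norm_eq, Real.sq_sqrt (Finset.sum_nonneg fun b _ => sq_nonneg _)]
  have htotal : ‖(LinearMap.toContinuousLinearMap (Matrix.toEuclideanLin (𝕜 := ℝ) N') x)‖ ^ 2
      ≤ C * R * K ^ 2 * ‖x‖ ^ 2 := by
    rw [hnorm_sq]
    calc ∑ i, ‖y i‖ ^ 2 ≤ ∑ i, R * (K ^ 2 * ∑ j, G i j * ‖xb j‖ ^ 2) :=
          Finset.sum_le_sum fun i _ => hyssq i
      _ = ∑ i, ∑ j, R * K ^ 2 * (G i j * ‖xb j‖ ^ 2) :=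
          Finset.sum_congr rfl fun i _ => by
            rw [Finset.mul_sum, Finset.mul_sum]
            exact Finset.sum_congr rfl fun j _ => by ring
      _ = ∑ j, ∑ i, R * K ^ 2 * (G i j * ‖xb j‖ ^ 2) := Finset.sum_comm
      _ = R * K ^ 2 * ∑ j, (∑ i, G i j) * ‖xb j‖ ^ 2 := by
          rw [Finset.mul_sum]
          refine Finset.sum_congr rfl fun j _ => ?_
          rw [Finset.sum_mul, Finset.mul_sum]
      _ ≤ R * K ^ 2 * ∑ j, C * ‖xb j‖ ^ 2 := by
          refine mul_le_mul_of_nonneg_left (Finset.sum_le_sum fun j _ => ?_)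
            (mul_nonneg hR0 (sq_nonneg _))
          exact mul_le_mul_of_nonneg_right (hCle j) (sq_nonneg _)
      _ = C * R * K ^ 2 * ‖x‖ ^ 2 := by
          rw [← Finset.mul_sum, hxsq]; ring
  have hrhs0 : 0 ≤ Real.sqrt (C * R) * K * ‖x‖ :=
    mul_nonneg (mul_nonneg (Real.sqrt_nonneg _) hK0) (norm_nonneg _)
  have hsq : (Real.sqrt (C * R) * K * ‖x‖) ^ 2 = C * R * K ^ 2 * ‖x‖ ^ 2 := by
    rw [mul_pow, mul_pow, Real.sq_sqrt (mul_nonneg hC0 hR0)]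
  calc ‖(LinearMap.toContinuousLinearMap (Matrix.toEuclideanLin (𝕜 := ℝ) N') x)‖
      = Real.sqrt (‖(LinearMap.toContinuousLinearMap (Matrix.toEuclideanLin (𝕜 := ℝ) N') x)‖ ^ 2) := by
        rw [Real.sqrt_sq (norm_nonneg _)]
    _ ≤ Real.sqrt (C * R * K ^ 2 * ‖x‖ ^ 2) := Real.sqrt_le_sqrt htotal
    _ = Real.sqrt (C * R) * K * ‖x‖ := by
        rw [← hsq, Real.sqrt_sq hrhs0]
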